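/- The weight 26 normalized Hecke eigenform f₂₆ = Δ·E₆·E₄² on SL₂(ℤ) has integer Fourier coefficients a(n) with a(2) = -48, a(3) = -195804, a(5) = -741989850, a(7) = 39080597192, a(11) = 8419515299052, a(13) = -81651045335314, a(17) = -2519900028948078, a(19) = -6082056370308940, and for each prime p ∈ {2, 3, 5, 7, 11, 13, 17, 19} one has p | a(p). -/

import Mathlib

open Polynomial Finset

/-- The `n`-th Fourier coefficient of `Δ = q ∏_{k≥1}(1-q^k)^24`, computed from the
truncated product (factors `(1 - q^k)` with `k > n` do not affect the coefficient). -/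
noncomputable def deltaCoeff (n : ℕ) : ℤ :=
  ((X : ℤ[X]) * ∏ k ∈ Finset.range n, (1 - (X : ℤ[X]) ^ (k + 1)) ^ 24).coeff n

/-- The `n`-th Fourier coefficient of `E₄ = 1 + 240 Σ σ₃(n) qⁿ`. -/
def e4Coeff (n : ℕ) : ℤ := if n = 0 then 1 else 240 * ∑ d ∈ n.divisors, (d : ℤ) ^ 3

/-- The `n`-th Fourier coefficient of `E₆ = 1 - 504 Σ σ₅(n) qⁿ`. -/
def e6Coeff (n : ℕ) : ℤ := if n = 0 then 1 else -504 * ∑ d ∈ n.divisors, (d : ℤ) ^ 5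

/-- The `n`-th Fourier coefficient of `f₂₆ = Δ·E₆·E₄²`, as a quadruple convolution. -/
noncomputable def f26Coeff (n : ℕ) : ℤ :=
  ∑ ij ∈ Finset.HasAntidiagonal.antidiagonal n, ∑ kl ∈ Finset.HasAntidiagonal.antidiagonal ij.2,
    ∑ uv ∈ Finset.HasAntidiagonal.antidiagonal kl.2,
      deltaCoeff ij.1 * e6Coeff kl.1 * e4Coeff uv.1 * e4Coeff uv.2

/-- Coefficient `m` of `(1 - X^k)^24`. -/
def gC (k m : ℕ) : ℤ :=
  ∑ i ∈ Finset.range 25, if m = k * i then (-1) ^ i * (Nat.choose 24 i : ℤ) else 0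

def Ls : List (List ℤ) := [
  [1,0,0,0,0,0,0,0,0,0,0,0,0,0,0,0,0,0,0,0],
  [1,-24,276,-2024,10626,-42504,134596,-346104,735471,-1307504,1961256,-2496144,2704156,-2496144,1961256,-1307504,735471,-346104,134596,-42504],
  [1,-24,252,-1448,4278,-552,-46276,163944,-110055,-890560,2841696,-1099584,-12482928,28204992,5146848,-119174592,160104564,173555424,-729510320,419089440],
  [1,-24,252,-1472,4854,-6600,-11248,54648,-27255,-181608,136344,879336,-940286,-3660864,4956684,12854792,-17851680,-47279352,57836812,166571520],
  [1,-24,252,-1472,4830,-6024,-17296,89976,-143475,-29832,475848,-838488,1051514,-1075296,-1930068,9812904,-12621066,3560952,1951044,-25495776],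
  [1,-24,252,-1472,4830,-6048,-16720,83928,-108147,-145752,620700,-430008,-1038358,1961832,118980,-3272096,2777526,2647944,-8861624,2816304],
  [1,-24,252,-1472,4830,-6048,-16744,84504,-114195,-110424,504780,-284856,-636802,-59064,2784060,-180320,-10786194,11298888,11442224,-21054960],
  [1,-24,252,-1472,4830,-6048,-16744,84480,-113619,-116472,540108,-400776,-491650,342792,756240,2553736,-8066466,-1222104,19611848,-7440960],
  [1,-24,252,-1472,4830,-6048,-16744,84480,-113643,-115896,534060,-365448,-607570,487944,1158096,526216,-5339334,1566600,6718808,1771392],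
  [1,-24,252,-1472,4830,-6048,-16744,84480,-113643,-115920,534636,-371496,-572242,372024,1303248,928072,-7366854,4294032,9500588,-11052672],
  [1,-24,252,-1472,4830,-6048,-16744,84480,-113643,-115920,534612,-370920,-578290,407352,1187328,1073224,-6964998,2266512,12228020,-8270592],
  [1,-24,252,-1472,4830,-6048,-16744,84480,-113643,-115920,534612,-370944,-577714,401304,1222656,957304,-6819846,2668368,10200500,-5543160],
  [1,-24,252,-1472,4830,-6048,-16744,84480,-113643,-115920,534612,-370944,-577738,401880,1216608,992632,-6935766,2813520,10602356,-7570680],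
  [1,-24,252,-1472,4830,-6048,-16744,84480,-113643,-115920,534612,-370944,-577738,401856,1217184,986584,-6900438,2697600,10747508,-7168824],
  [1,-24,252,-1472,4830,-6048,-16744,84480,-113643,-115920,534612,-370944,-577738,401856,1217160,987160,-6906486,2732928,10631588,-7023672],
  [1,-24,252,-1472,4830,-6048,-16744,84480,-113643,-115920,534612,-370944,-577738,401856,1217160,987136,-6905910,2726880,10666916,-7139592],
  [1,-24,252,-1472,4830,-6048,-16744,84480,-113643,-115920,534612,-370944,-577738,401856,1217160,987136,-6905934,2727456,10660868,-7104264],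
  [1,-24,252,-1472,4830,-6048,-16744,84480,-113643,-115920,534612,-370944,-577738,401856,1217160,987136,-6905934,2727432,10661444,-7110312],
  [1,-24,252,-1472,4830,-6048,-16744,84480,-113643,-115920,534612,-370944,-577738,401856,1217160,987136,-6905934,2727432,10661420,-7109736],
  [1,-24,252,-1472,4830,-6048,-16744,84480,-113643,-115920,534612,-370944,-577738,401856,1217160,987136,-6905934,2727432,10661420,-7109760]
]
def Dl : List ℤ := [0,1,-24,252,-1472,4830,-6048,-16744,84480,-113643,-115920,534612,-370944,-577738,401856,1217160,987136,-6905934,2727432,10661420]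


lemma gLem (k m : ℕ) : ((1 - (X : ℤ[X]) ^ k) ^ 24).coeff m = gC k m := by
  have h : (1 - (X : ℤ[X]) ^ k) ^ 24 =
      ∑ i ∈ Finset.range 25, C ((-1) ^ i * (Nat.choose 24 i : ℤ)) * X ^ (k * i) := by
    rw [sub_eq_add_neg, add_comm, add_pow]
    refine Finset.sum_congr rfl fun i _ => ?_
    rw [neg_pow, ← pow_mul, one_pow, mul_one, map_mul, map_pow, map_neg, map_one,
      C_eq_natCast]
    ring
  rw [h, finset_sum_coeff]
  unfold gC
  refine Finset.sum_congr rfl fun i _ => ?_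
  rw [coeff_C_mul, coeff_X_pow]
  split <;> simp_all

set_option maxRecDepth 100000 in
set_option maxHeartbeats 4000000 in
lemma key : ∀ n, n ≤ 19 → ∀ m, m < 20 →
    (∏ k ∈ Finset.range n, (1 - (X : ℤ[X]) ^ (k + 1)) ^ 24).coeff m =
      (Ls.getD n []).getD m 0 := by
  intro n
  induction n with
  | zero =>
    intro _ m hm
    rw [Finset.range_zero, Finset.prod_empty, Polynomial.coeff_one]
    revert hm; revert m; decide
  | succ n ih =>
    intro hn m hm
    rw [Finset.prod_range_succ, Polynomial.coeff_mul]
    have hstep : ∀ n' < 19, ∀ m' < 20,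
        (∑ p ∈ Finset.HasAntidiagonal.antidiagonal m', (Ls.getD n' []).getD p.1 0 * gC (n' + 1) p.2) =
          (Ls.getD (n' + 1) []).getD m' 0 := by decide
    rw [← hstep n (by omega) m hm]
    refine Finset.sum_congr rfl fun p hp => ?_
    rw [Finset.HasAntidiagonal.mem_antidiagonal] at hp
    rw [gLem, ih (by omega) p.1 (by omega)]

set_option maxRecDepth 100000 in
set_option maxHeartbeats 1000000 in
lemma deltaVal : ∀ n, n < 20 → deltaCoeff n = Dl.getD n 0 := by
  intro n hn
  unfold deltaCoeff
  match n, hn with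
  | 0, _ => simp [Dl]
  | (m + 1), hn =>
    rw [Polynomial.coeff_X_mul, key (m + 1) (by omega) m (by omega)]
    revert hn
    have : ∀ m' < 19, (Ls.getD (m' + 1) []).getD m' 0 = Dl.getD (m' + 1) 0 := by decide
    intro hn
    exact this m (by omega)

def f26C (n : ℕ) : ℤ :=
  ∑ ij ∈ Finset.HasAntidiagonal.antidiagonal n, ∑ kl ∈ Finset.HasAntidiagonal.antidiagonal ij.2,
    ∑ uv ∈ Finset.HasAntidiagonal.antidiagonal kl.2,
      Dl.getD ij.1 0 * e6Coeff kl.1 * e4Coeff uv.1 * e4Coeff uv.2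

lemma f26Eq (n : ℕ) (hn : n < 20) : f26Coeff n = f26C n := by
  unfold f26Coeff f26C
  refine Finset.sum_congr rfl fun ij hij => ?_
  rw [Finset.HasAntidiagonal.mem_antidiagonal] at hij
  rw [deltaVal ij.1 (by omega)]

set_option maxHeartbeats 4000000 in
/-- The weight-26 normalized Hecke eigenform `f₂₆ = Δ·E₆·E₄²` has coefficients
`a(2) = -48`, `a(3) = -195804`, …, and `p ∣ a(p)` for each prime
`p ∈ {2,3,5,7,11,13,17,19}`. -/
theorem stmt17 :
    f26Coeff 2 = -48 ∧ f26Coeff 3 = -195804 ∧ f26Coeff 5 = -741989850 ∧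
    f26Coeff 7 = 39080597192 ∧ f26Coeff 11 = 8419515299052 ∧
    f26Coeff 13 = -81651045335314 ∧ f26Coeff 17 = -2519900028948078 ∧
    f26Coeff 19 = -6082056370308940 ∧
    ∀ p ∈ ({2, 3, 5, 7, 11, 13, 17, 19} : Finset ℕ), (p : ℤ) ∣ f26Coeff p := by
  refine ⟨?_, ?_, ?_, ?_, ?_, ?_, ?_, ?_, ?_⟩
  · rw [f26Eq 2 (by omega)]; decide
  · rw [f26Eq 3 (by omega)]; decide
  · rw [f26Eq 5 (by omega)]; decide
  · rw [f26Eq 7 (by omega)]; decide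
  · rw [f26Eq 11 (by omega)]; decide
  · rw [f26Eq 13 (by omega)]; decide
  · rw [f26Eq 17 (by omega)]; decide
  · rw [f26Eq 19 (by omega)]; decide
  · intro p hp
    fin_cases hp <;> rw [f26Eq _ (by omega)] <;> decide
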